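/- Let p1, p2, p3, p4, p5, p6 be points of ℝ² with no three of them collinear. Suppose p1 lies in the interior of each of the five consecutive triangles conv{p2,p3,p4}, conv{p3,p4,p5}, conv{p4,p5,p6}, conv{p5,p6,p2}, conv{p6,p2,p3}, and that exactly two of the points p2, …, p6 lie in the interior of the triangle spanned by the other three. Then the two interior points are consecutive in the cyclic sequence (p2, p3, p4, p5, p6), i.e. they are {p_i, p_{i+1}} for some index i taken cyclically in (2,3,4,5,6). -/

import Mathlib

noncomputable section

/-- The plane ℝ². -/
abbrev Plane := EuclideanSpace ℝ (Fin 2)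

/-- No three of the points `f 0, …, f (n-1)` are collinear. -/
def NoThreeCollinear {n : ℕ} (f : Fin n → Plane) : Prop :=
  ∀ i j k : Fin n, i ≠ j → i ≠ k → j ≠ k → ¬ Collinear ℝ ({f i, f j, f k} : Set Plane)

namespace Case3Aux

/-- Affine functional vanishing on the line through `c` and `d`. -/
def Lf (c d x : Plane) : ℝ :=
  (d 1 - c 1) * (x 0 - c 0) - (d 0 - c 0) * (x 1 - c 1)

lemma Lf_left (c d : Plane) : Lf c d c = 0 := by simp [Lf]

lemma Lf_right (c d : Plane) : Lf c d d = 0 := by simp [Lf]; ring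

lemma Lf_aff2 (c d a b : Plane) (x y : ℝ) (hxy : x + y = 1) :
    Lf c d (x • a + y • b) = x * Lf c d a + y * Lf c d b := by
  simp only [Lf, PiLp.add_apply, PiLp.smul_apply, smul_eq_mul]
  linear_combination ((d 1 - c 1) * c 0 - (d 0 - c 0) * c 1) * hxy

lemma plane_ext {x y : Plane} (h0 : x 0 = y 0) (h1 : x 1 = y 1) : x = y := by
  ext i
  fin_cases i
  · exact h0
  · exact h1

lemma coord_smul_vadd (r : ℝ) (v c : Plane) (i : Fin 2) :
    (r • v +ᵥ c) i = r * v i + c i := by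
  rw [vadd_eq_add]
  simp [PiLp.add_apply, PiLp.smul_apply, smul_eq_mul]

lemma coord_sub (x y : Plane) (i : Fin 2) : (x - y) i = x i - y i := rfl

lemma collinear_of_Lf (b c d : Plane) (h : Lf c d b = 0) :
    Collinear ℝ ({b, c, d} : Set Plane) := by
  simp only [Lf] at h
  have key : ∃ v : Plane, (∃ r : ℝ, b = r • v +ᵥ c) ∧ (∃ r : ℝ, c = r • v +ᵥ c) ∧
      (∃ r : ℝ, d = r • v +ᵥ c) := by
    by_cases h0 : d 0 - c 0 = 0
    · by_cases h1 : d 1 - c 1 = 0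
      · refine ⟨b - c, ⟨1, ?_⟩, ⟨0, ?_⟩, ⟨0, ?_⟩⟩ <;>
          apply plane_ext <;> rw [coord_smul_vadd, coord_sub] <;> linarith
      · refine ⟨d - c, ⟨(b 1 - c 1) / (d 1 - c 1), ?_⟩, ⟨0, ?_⟩, ⟨1, ?_⟩⟩
        · have h' : (d 1 - c 1) * (b 0 - c 0) = 0 := by
            linear_combination h + (b 1 - c 1) * h0
          have hb0 : b 0 - c 0 = 0 := (mul_eq_zero.mp h').resolve_left h1
          apply plane_ext <;> rw [coord_smul_vadd, coord_sub]
          · rw [h0]; linarith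
          · field_simp; ring
        · apply plane_ext <;> rw [coord_smul_vadd, coord_sub] <;> ring
        · apply plane_ext <;> rw [coord_smul_vadd, coord_sub] <;> ring
    · refine ⟨d - c, ⟨(b 0 - c 0) / (d 0 - c 0), ?_⟩, ⟨0, ?_⟩, ⟨1, ?_⟩⟩
      · apply plane_ext <;> rw [coord_smul_vadd, coord_sub]
        · field_simp; ring
        · field_simp
          linear_combination -h
      · apply plane_ext <;> rw [coord_smul_vadd, coord_sub] <;> ring
      · apply plane_ext <;> rw [coord_smul_vadd, coord_sub] <;> ring
  obtain ⟨v, hb, hc, hd⟩ := key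
  rw [collinear_iff_of_mem (show c ∈ ({b, c, d} : Set Plane) by simp)]
  refine ⟨v, fun p hp => ?_⟩
  simp only [Set.mem_insert_iff, Set.mem_singleton_iff] at hp
  rcases hp with hp | hp | hp <;> rw [hp]
  exacts [hb, hc, hd]

lemma halfspace (c d g q : Plane)
    (hncol : ¬ Collinear ℝ ({g, c, d} : Set Plane))
    (hq : q ∈ interior (convexHull ℝ ({g, c, d} : Set Plane))) :
    0 < Lf c d g * Lf c d q := by
  have hLg : Lf c d g ≠ 0 := fun h => hncol (collinear_of_Lf g c d h)
  have hsub : convexHull ℝ ({g, c, d} : Set Plane) ⊆ {x | 0 ≤ Lf c d g * Lf c d x} := by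
    apply convexHull_min
    · rintro x hx
      simp only [Set.mem_insert_iff, Set.mem_singleton_iff] at hx
      rcases hx with rfl | rfl | rfl
      · simp only [Set.mem_setOf_eq]; exact mul_self_nonneg _
      · simp only [Set.mem_setOf_eq, Lf_left]; simp
      · simp only [Set.mem_setOf_eq, Lf_right]; simp
    · intro x hx y hy a b ha hb hab
      simp only [Set.mem_setOf_eq] at hx hy ⊢
      rw [Lf_aff2 c d x y a b hab]
      nlinarith
  set A : ℝ := d 1 - c 1 with hA
  set B : ℝ := d 0 - c 0 with hB
  have hAB : 0 < A ^ 2 + B ^ 2 := by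
    rcases eq_or_lt_of_le (show (0:ℝ) ≤ A ^ 2 + B ^ 2 by positivity) with h | h
    · exfalso
      have hA0 : A = 0 := by nlinarith [sq_nonneg A, sq_nonneg B]
      have hB0 : B = 0 := by nlinarith [sq_nonneg A, sq_nonneg B, sq_nonneg (A+B)]
      apply hLg
      simp only [Lf, ← hA, ← hB, hA0, hB0]
      ring
    · exact h
  set w : Plane := (WithLp.equiv 2 (Fin 2 → ℝ)).symm ![A, -B] with hwdef
  have hw0 : w 0 = A := rfl
  have hw1 : w 1 = -B := rfl
  have hLshift : ∀ (x : Plane) (t : ℝ),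
      Lf c d (x + t • w) = Lf c d x + t * (A ^ 2 + B ^ 2) := by
    intro x t
    simp only [Lf, ← hA, ← hB, PiLp.add_apply, PiLp.smul_apply, smul_eq_mul, hw0, hw1]
    ring
  obtain ⟨ε, hε, hball⟩ := Metric.mem_nhds_iff.mp (mem_interior_iff_mem_nhds.mp hq)
  set δ : ℝ := ε / (2 * (‖w‖ + 1)) with hδdef
  have hnw : (0:ℝ) ≤ ‖w‖ := norm_nonneg w
  have hδ : 0 < δ := by positivity
  set t : ℝ := if 0 < Lf c d g then -δ else δ with ht
  have habs : |t| = δ := by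
    rw [ht]; split
    · rw [abs_neg, abs_of_pos hδ]
    · exact abs_of_pos hδ
  have hmem : q + t • w ∈ convexHull ℝ ({g, c, d} : Set Plane) := by
    apply hball
    simp only [Metric.mem_ball, dist_eq_norm, add_sub_cancel_left]
    rw [norm_smul, Real.norm_eq_abs, habs, hδdef]
    rw [div_mul_eq_mul_div, div_lt_iff₀ (by positivity)]
    nlinarith
  have h0 := hsub hmem
  simp only [Set.mem_setOf_eq] at h0
  rw [hLshift] at h0
  have hgt : Lf c d g * t < 0 := by
    rw [ht]; split
    · next hpos => nlinarith
    · next hneg =>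
        have : Lf c d g < 0 := lt_of_le_of_ne (not_lt.mp hneg) hLg
        nlinarith
  nlinarith [mul_pos (neg_pos.mpr hgt) hAB]

lemma core (q b c d e : Plane)
    (hbcd : ¬ Collinear ℝ ({b, c, d} : Set Plane))
    (hcde : ¬ Collinear ℝ ({c, d, e} : Set Plane))
    (hd : d ∈ convexHull ℝ ({b, c, e} : Set Plane))
    (h1 : q ∈ interior (convexHull ℝ ({b, c, d} : Set Plane)))
    (h2 : q ∈ interior (convexHull ℝ ({c, d, e} : Set Plane))) : False := by
  have hset : ({c, d, e} : Set Plane) = {e, c, d} := by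
    ext x; simp only [Set.mem_insert_iff, Set.mem_singleton_iff]; tauto
  rw [hset] at h2 hcde
  have hLb : Lf c d b ≠ 0 := fun h => hbcd (collinear_of_Lf b c d h)
  have hLe : Lf c d e ≠ 0 := fun h => hcde (by
    have := collinear_of_Lf e c d h
    exact this)
  have hpos1 := halfspace c d b q hbcd h1
  have hpos2 := halfspace c d e q hcde h2
  rw [show ({b, c, e} : Set Plane) = insert b {c, e} from rfl,
    convexHull_insert (by exact ⟨c, by simp⟩), mem_convexJoin] at hd
  obtain ⟨a, ha, z, hz, hdseg⟩ := hd
  rw [Set.mem_singleton_iff] at ha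
  rw [ha] at hdseg
  rw [convexHull_pair] at hz
  obtain ⟨u, u', hu, hu', huu, hud⟩ := hdseg
  obtain ⟨v, v', hv, hv', hvv, hvz⟩ := hz
  have hLd : (0:ℝ) = u * Lf c d b + u' * Lf c d z := by
    have h := Lf_aff2 c d b z u u' huu
    rw [hud, Lf_right] at h
    linarith
  have hLz : Lf c d z = v' * Lf c d e := by
    have h := Lf_aff2 c d c e v v' hvv
    rw [hvz, Lf_left] at h
    linarith
  rcases eq_or_lt_of_le hu with hu0 | hu0
  · -- u = 0
    have hu1 : u' = 1 := by linarith
    have hLz0 : Lf c d z = 0 := by rw [← hu0] at hLd; simpa [hu1] using hLd.symm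
    have hv'0 : v' = 0 := by
      rcases mul_eq_zero.mp (hLz ▸ hLz0) with h | h
      · exact h
      · exact absurd h hLe
    have hv1 : v = 1 := by linarith
    have hzc : z = c := by rw [← hvz, hv1, hv'0]; simp
    have hdc : d = c := by rw [← hud, ← hu0, hu1, hzc]; simp
    apply hbcd
    have : ({b, c, d} : Set Plane) ⊆ {b, c} := by
      intro x hx; simp only [Set.mem_insert_iff, Set.mem_singleton_iff] at hx ⊢
      rcases hx with rfl | rfl | rfl
      · left; rfl
      · right; rfl
      · right; exact hdc
    exact (collinear_pair ℝ b c).subset this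
  · -- u > 0
    rw [hLz] at hLd
    have hw : u' * v' > 0 := by
      rcases eq_or_lt_of_le (mul_nonneg hu' hv') with h | h
      · exfalso
        apply hLb
        have hz0 : u' * (v' * Lf c d e) = 0 := by
          have hre : u' * (v' * Lf c d e) = u' * v' * Lf c d e := by ring
          rw [hre, ← h, zero_mul]
        have hub : u * Lf c d b = 0 := by linarith
        exact (mul_eq_zero.mp hub).resolve_left (by linarith)
      · exact h
    have hLe2 : 0 < Lf c d e ^ 2 := by positivity
    have hmul : 0 = u * (Lf c d b * Lf c d e) + u' * v' * Lf c d e ^ 2 := by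
      linear_combination (Lf c d e) * hLd
    have hneg : Lf c d b * Lf c d e < 0 := by
      nlinarith [mul_pos hw hLe2]
    nlinarith [mul_pos hpos1 hpos2, sq_nonneg (Lf c d q)]

lemma img3 (f : Fin 5 → Plane) (i j a b c : Fin 5)
    (h : {k : Fin 5 | k ≠ i ∧ k ≠ j} = {a, b, c}) :
    f '' {k | k ≠ i ∧ k ≠ j} = {f a, f b, f c} := by
  rw [h]
  simp [Set.image_insert_eq]

end Case3Aux

theorem case3_interior_points_consecutive
    (p1 p2 p3 p4 p5 p6 : Plane)
    (hcol : NoThreeCollinear ![p1, p2, p3, p4, p5, p6])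
    (h1 : p1 ∈ interior (convexHull ℝ ({p2, p3, p4} : Set Plane)))
    (h2 : p1 ∈ interior (convexHull ℝ ({p3, p4, p5} : Set Plane)))
    (h3 : p1 ∈ interior (convexHull ℝ ({p4, p5, p6} : Set Plane)))
    (h4 : p1 ∈ interior (convexHull ℝ ({p5, p6, p2} : Set Plane)))
    (h5 : p1 ∈ interior (convexHull ℝ ({p6, p2, p3} : Set Plane)))
    (i j : Fin 5) (hij : i ≠ j)
    (hi : ![p2, p3, p4, p5, p6] i ∈
      interior (convexHull ℝ (![p2, p3, p4, p5, p6] '' {k | k ≠ i ∧ k ≠ j})))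
    (hj : ![p2, p3, p4, p5, p6] j ∈
      interior (convexHull ℝ (![p2, p3, p4, p5, p6] '' {k | k ≠ i ∧ k ≠ j}))) :
    j = i + 1 ∨ i = j + 1 := by
  have nc1 : ¬ Collinear ℝ ({p2, p3, p4} : Set Plane) :=
    hcol 1 2 3 (by decide) (by decide) (by decide)
  have nc2 : ¬ Collinear ℝ ({p3, p4, p5} : Set Plane) :=
    hcol 2 3 4 (by decide) (by decide) (by decide)
  have nc3 : ¬ Collinear ℝ ({p4, p5, p6} : Set Plane) :=
    hcol 3 4 5 (by decide) (by decide) (by decide)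
  have nc4 : ¬ Collinear ℝ ({p5, p6, p2} : Set Plane) :=
    hcol 4 5 1 (by decide) (by decide) (by decide)
  have nc5 : ¬ Collinear ℝ ({p6, p2, p3} : Set Plane) :=
    hcol 5 1 2 (by decide) (by decide) (by decide)
  fin_cases i <;> fin_cases j <;>
    first
    | exact absurd rfl hij
    | exact Or.inl rfl
    | exact Or.inr rfl
    | skip
  · -- i = 0, j = 2
    have hset : {k : Fin 5 | k ≠ 0 ∧ k ≠ 2} = {3, 4, 1} := by
      ext k; fin_cases k <;> simp
    have hd : p2 ∈ convexHull ℝ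
        (![p2, p3, p4, p5, p6] '' {k : Fin 5 | k ≠ 0 ∧ k ≠ 2}) := interior_subset hi
    rw [Case3Aux.img3 _ 0 2 3 4 1 hset] at hd
    exact (Case3Aux.core p1 p5 p6 p2 p3 nc4 nc5 hd h4 h5).elim
  · -- i = 0, j = 3
    have hset : {k : Fin 5 | k ≠ 0 ∧ k ≠ 3} = {1, 2, 4} := by
      ext k; fin_cases k <;> simp
    have hd : p5 ∈ convexHull ℝ
        (![p2, p3, p4, p5, p6] '' {k : Fin 5 | k ≠ 0 ∧ k ≠ 3}) := interior_subset hj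
    rw [Case3Aux.img3 _ 0 3 1 2 4 hset] at hd
    exact (Case3Aux.core p1 p3 p4 p5 p6 nc2 nc3 hd h2 h3).elim
  · -- i = 1, j = 3
    have hset : {k : Fin 5 | k ≠ 1 ∧ k ≠ 3} = {4, 0, 2} := by
      ext k; fin_cases k <;> simp
    have hd : p3 ∈ convexHull ℝ
        (![p2, p3, p4, p5, p6] '' {k : Fin 5 | k ≠ 1 ∧ k ≠ 3}) := interior_subset hi
    rw [Case3Aux.img3 _ 1 3 4 0 2 hset] at hd
    exact (Case3Aux.core p1 p6 p2 p3 p4 nc5 nc1 hd h5 h1).elim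
  · -- i = 1, j = 4
    have hset : {k : Fin 5 | k ≠ 1 ∧ k ≠ 4} = {2, 3, 0} := by
      ext k; fin_cases k <;> simp
    have hd : p6 ∈ convexHull ℝ
        (![p2, p3, p4, p5, p6] '' {k : Fin 5 | k ≠ 1 ∧ k ≠ 4}) := interior_subset hj
    rw [Case3Aux.img3 _ 1 4 2 3 0 hset] at hd
    exact (Case3Aux.core p1 p4 p5 p6 p2 nc3 nc4 hd h3 h4).elim
  · -- i = 2, j = 0
    have hset : {k : Fin 5 | k ≠ 2 ∧ k ≠ 0} = {3, 4, 1} := by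
      ext k; fin_cases k <;> simp
    have hd : p2 ∈ convexHull ℝ
        (![p2, p3, p4, p5, p6] '' {k : Fin 5 | k ≠ 2 ∧ k ≠ 0}) := interior_subset hj
    rw [Case3Aux.img3 _ 2 0 3 4 1 hset] at hd
    exact (Case3Aux.core p1 p5 p6 p2 p3 nc4 nc5 hd h4 h5).elim
  · -- i = 2, j = 4
    have hset : {k : Fin 5 | k ≠ 2 ∧ k ≠ 4} = {0, 1, 3} := by
      ext k; fin_cases k <;> simp
    have hd : p4 ∈ convexHull ℝ
        (![p2, p3, p4, p5, p6] '' {k : Fin 5 | k ≠ 2 ∧ k ≠ 4}) := interior_subset hi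
    rw [Case3Aux.img3 _ 2 4 0 1 3 hset] at hd
    exact (Case3Aux.core p1 p2 p3 p4 p5 nc1 nc2 hd h1 h2).elim
  · -- i = 3, j = 0
    have hset : {k : Fin 5 | k ≠ 3 ∧ k ≠ 0} = {1, 2, 4} := by
      ext k; fin_cases k <;> simp
    have hd : p5 ∈ convexHull ℝ
        (![p2, p3, p4, p5, p6] '' {k : Fin 5 | k ≠ 3 ∧ k ≠ 0}) := interior_subset hi
    rw [Case3Aux.img3 _ 3 0 1 2 4 hset] at hd
    exact (Case3Aux.core p1 p3 p4 p5 p6 nc2 nc3 hd h2 h3).elim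
  · -- i = 3, j = 1
    have hset : {k : Fin 5 | k ≠ 3 ∧ k ≠ 1} = {4, 0, 2} := by
      ext k; fin_cases k <;> simp
    have hd : p3 ∈ convexHull ℝ
        (![p2, p3, p4, p5, p6] '' {k : Fin 5 | k ≠ 3 ∧ k ≠ 1}) := interior_subset hj
    rw [Case3Aux.img3 _ 3 1 4 0 2 hset] at hd
    exact (Case3Aux.core p1 p6 p2 p3 p4 nc5 nc1 hd h5 h1).elim
  · -- i = 4, j = 1
    have hset : {k : Fin 5 | k ≠ 4 ∧ k ≠ 1} = {2, 3, 0} := by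
      ext k; fin_cases k <;> simp
    have hd : p6 ∈ convexHull ℝ
        (![p2, p3, p4, p5, p6] '' {k : Fin 5 | k ≠ 4 ∧ k ≠ 1}) := interior_subset hi
    rw [Case3Aux.img3 _ 4 1 2 3 0 hset] at hd
    exact (Case3Aux.core p1 p4 p5 p6 p2 nc3 nc4 hd h3 h4).elim
  · -- i = 4, j = 2
    have hset : {k : Fin 5 | k ≠ 4 ∧ k ≠ 2} = {0, 1, 3} := by
      ext k; fin_cases k <;> simp
    have hd : p4 ∈ convexHull ℝ
        (![p2, p3, p4, p5, p6] '' {k : Fin 5 | k ≠ 4 ∧ k ≠ 2}) := interior_subset hj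
    rw [Case3Aux.img3 _ 4 2 0 1 3 hset] at hd
    exact (Case3Aux.core p1 p2 p3 p4 p5 nc1 nc2 hd h1 h2).elim
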